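/- Projection onto a quadratic equality constraint defined by a rank-one unit-norm form: let a ∈ ℂ^M with ‖a‖ = 1, A = a a^H, Z ∈ ℂ^{M×U} with a^H Z ≠ 0, and η > 0. Then V = (I − (μ/(1+μ)) A) Z with μ = ‖a^H Z‖/√η − 1 satisfies ‖a^H V‖² = η, and V minimizes ‖V − Z‖²_F subject to ‖a^H V‖²_F = η. -/

import Mathlib

/-- Projection onto the rank-one quadratic equality constraint:
`V = (I − (μ/(1+μ)) a a^H) Z` with `μ = ‖a^H Z‖/√η − 1` satisfies `‖a^H V‖² = η`
and minimizes `‖V − Z‖²_F` subject to that constraint. -/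
theorem stmt10 (M U : ℕ) (a : Fin M → ℂ) (ha : ∑ i, ‖a i‖ ^ 2 = 1)
    (Z : Matrix (Fin M) (Fin U) ℂ) (η : ℝ) (hη : 0 < η)
    (aH : Matrix (Fin M) (Fin U) ℂ → Fin U → ℂ)
    (haH : ∀ X j, aH X j = ∑ i, (starRingEnd ℂ) (a i) * X i j)
    (hZ : aH Z ≠ 0)
    (μ : ℝ)
    (hμ : μ = Real.sqrt (∑ j, ‖aH Z j‖ ^ 2) / Real.sqrt η - 1)
    (V : Matrix (Fin M) (Fin U) ℂ)
    (hV : V = (1 - ((μ / (1 + μ) : ℝ)) • Matrix.vecMulVec a (star a)) * Z) :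
    (∑ j, ‖aH V j‖ ^ 2 = η) ∧
    (∀ X : Matrix (Fin M) (Fin U) ℂ, (∑ j, ‖aH X j‖ ^ 2 = η) →
      (∑ i, ∑ j, ‖(V - Z) i j‖ ^ 2) ≤
        ∑ i, ∑ j, ‖(X - Z) i j‖ ^ 2) := by
  have hrη : 0 < Real.sqrt η := Real.sqrt_pos.mpr hη
  set c : Fin U → ℂ := aH Z with hc
  set S : ℝ := ∑ j, ‖c j‖ ^ 2 with hS
  have hSpos : 0 < S := by
    obtain ⟨j, hj⟩ := Function.ne_iff.mp hZ
    have h1 : 0 < ‖c j‖ ^ 2 :=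
      pow_pos (norm_pos_iff.mpr hj) 2
    exact lt_of_lt_of_le h1 (Finset.single_le_sum (f := fun j => ‖c j‖ ^ 2)
      (fun i _ => by positivity) (Finset.mem_univ j))
  set s : ℝ := Real.sqrt S with hs
  have hspos : 0 < s := Real.sqrt_pos.mpr hSpos
  have hs2 : s ^ 2 = S := Real.sq_sqrt hSpos.le
  set t : ℝ := μ / (1 + μ) with ht
  have h1μ : 1 + μ = s / Real.sqrt η := by rw [hμ]; ring
  have h1μne : 1 + μ ≠ 0 := by rw [h1μ]; exact ne_of_gt (div_pos hspos hrη)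
  have htval : t = (s - Real.sqrt η) / s := by
    rw [ht, h1μ, hμ]
    rw [div_eq_div_iff (div_pos hspos hrη).ne' hspos.ne']
    field_simp
  -- normalization in ℂ
  have haC : ∑ i, (starRingEnd ℂ) (a i) * a i = 1 := by
    have h1 : ∀ i : Fin M, (starRingEnd ℂ) (a i) * a i = ((‖a i‖ ^ 2 : ℝ) : ℂ) := by
      intro i
      rw [← Complex.normSq_eq_norm_sq, ← Complex.mul_conj (a i)]
      ring
    rw [Finset.sum_congr rfl (fun i _ => h1 i), ← Complex.ofReal_sum, ha, Complex.ofReal_one]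
  -- entrywise formula for V
  have hVe : ∀ i j, V i j = Z i j - (t : ℂ) * a i * c j := by
    intro i j
    rw [hV]
    simp only [Matrix.mul_apply, Matrix.sub_apply, Matrix.one_apply, Matrix.smul_apply,
      Matrix.vecMulVec_apply, Pi.star_apply, sub_mul, ite_mul, one_mul, zero_mul,
      Finset.sum_sub_distrib, Finset.sum_ite_eq, Finset.mem_univ, if_true]
    rw [hc, haH, Finset.mul_sum]
    congr 1
    apply Finset.sum_congr rfl
    intro k _
    rw [Complex.real_smul, starRingEnd_apply]
    ring
  -- aH V
  have haHV : ∀ j, aH V j = ((Real.sqrt η / s : ℝ) : ℂ) * c j := by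
    intro j
    rw [haH]
    have h1 : ∀ i : Fin M, (starRingEnd ℂ) (a i) * V i j =
        (starRingEnd ℂ) (a i) * Z i j - (t : ℂ) * ((starRingEnd ℂ) (a i) * a i) * c j := by
      intro i; rw [hVe]; ring
    rw [Finset.sum_congr rfl (fun i _ => h1 i), Finset.sum_sub_distrib, ← Finset.sum_mul,
      ← Finset.mul_sum, haC, ← haH, ← hc]
    have h2r : Real.sqrt η / s = 1 - t := by
      rw [htval]
      field_simp
      ring
    have h2 : ((Real.sqrt η / s : ℝ) : ℂ) = 1 - (t : ℂ) := by
      rw [h2r]; push_cast; ring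
    rw [h2]; ring
  have part1 : ∑ j, ‖aH V j‖ ^ 2 = η := by
    have h1 : ∀ j, ‖aH V j‖ ^ 2 = (Real.sqrt η / s) ^ 2 * ‖c j‖ ^ 2 := by
      intro j
      rw [haHV j, norm_mul, Complex.norm_real, Real.norm_eq_abs, abs_of_nonneg (div_pos hrη hspos).le, mul_pow]
    rw [Finset.sum_congr rfl (fun j _ => h1 j), ← Finset.mul_sum, ← hS, ← hs2, div_pow,
      Real.sq_sqrt hη.le]
    exact div_mul_cancel₀ η (pow_ne_zero 2 hspos.ne')
  refine ⟨part1, ?_⟩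
  -- Cauchy–Schwarz per column
  have key : ∀ (W : Matrix (Fin M) (Fin U) ℂ) (j : Fin U),
      ‖∑ i, (starRingEnd ℂ) (a i) * W i j‖ ^ 2 ≤ ∑ i, ‖W i j‖ ^ 2 := by
    intro W j
    calc ‖∑ i, (starRingEnd ℂ) (a i) * W i j‖ ^ 2
        ≤ (∑ i, ‖a i‖ * ‖W i j‖) ^ 2 := by
          apply pow_le_pow_left₀ (norm_nonneg _)
          refine le_trans (norm_sum_le _ _) (le_of_eq ?_)
          apply Finset.sum_congr rfl
          intro i _
          rw [norm_mul, Complex.norm_conj]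
      _ ≤ (∑ i, ‖a i‖ ^ 2) * ∑ i, ‖W i j‖ ^ 2 :=
          Finset.sum_mul_sq_le_sq_mul_sq _ _ _
      _ = ∑ i, ‖W i j‖ ^ 2 := by rw [ha, one_mul]
  -- Euclidean space machinery
  set F : (Fin U → ℂ) → EuclideanSpace ℂ (Fin U) := fun f => (WithLp.linearEquiv 2 ℂ (∀ _ : Fin U, ℂ)).symm f with hF
  have hFnorm : ∀ f : Fin U → ℂ, ‖F f‖ = Real.sqrt (∑ j, ‖f j‖ ^ 2) := by
    intro f
    rw [EuclideanSpace.norm_eq]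
    congr 1
  intro X hX
  set d : Fin U → ℂ := aH X with hd
  have hsub : ∀ j, aH (X - Z) j = d j - c j := by
    intro j
    rw [haH, hd, hc, haH, haH, ← Finset.sum_sub_distrib]
    apply Finset.sum_congr rfl
    intro i _
    rw [Matrix.sub_apply]; ring
  -- value of LHS
  have hLHS : ∑ i, ∑ j, ‖(V - Z) i j‖ ^ 2 = (s - Real.sqrt η) ^ 2 := by
    have h1 : ∀ i j, ‖(V - Z) i j‖ ^ 2 =
        t ^ 2 * (‖a i‖ ^ 2 * ‖c j‖ ^ 2) := by
      intro i j
      rw [Matrix.sub_apply, hVe]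
      have : Z i j - (t : ℂ) * a i * c j - Z i j = -((t : ℂ) * a i * c j) := by ring
      rw [this, norm_neg, norm_mul, norm_mul, Complex.norm_real, Real.norm_eq_abs, mul_pow, mul_pow,
        sq_abs, mul_assoc]
    calc ∑ i, ∑ j, ‖(V - Z) i j‖ ^ 2
        = ∑ i, ∑ j, t ^ 2 * (‖a i‖ ^ 2 * ‖c j‖ ^ 2) := by
          apply Finset.sum_congr rfl; intro i _
          exact Finset.sum_congr rfl fun j _ => h1 i j
      _ = t ^ 2 * ((∑ i, ‖a i‖ ^ 2) * ∑ j, ‖c j‖ ^ 2) := by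
          rw [Finset.sum_mul_sum, Finset.mul_sum]
          exact Finset.sum_congr rfl fun i _ => by rw [Finset.mul_sum]
      _ = t ^ 2 * S := by rw [ha, one_mul, hS]
      _ = (s - Real.sqrt η) ^ 2 := by
          rw [htval, ← hs2, div_pow]
          exact div_mul_cancel₀ _ (pow_ne_zero 2 hspos.ne')
  rw [hLHS]
  have hnd : ‖F d‖ = Real.sqrt η := by rw [hFnorm, hd, hX]
  have hnc : ‖F c‖ = s := by rw [hFnorm]
  have htri : |Real.sqrt η - s| ≤ ‖F d - F c‖ := by
    rw [← hnd, ← hnc]; exact abs_norm_sub_norm_le _ _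
  have hsq : (s - Real.sqrt η) ^ 2 ≤ ‖F d - F c‖ ^ 2 := by
    have h1 : (s - Real.sqrt η) ^ 2 = |Real.sqrt η - s| ^ 2 := by
      rw [sq_abs]; ring
    rw [h1]
    exact pow_le_pow_left₀ (abs_nonneg _) htri 2
  have hFsub : F d - F c = F (fun j => d j - c j) := (map_sub ((WithLp.linearEquiv 2 ℂ (∀ _ : Fin U, ℂ)).symm) d c).symm
  have hnormsub : ‖F d - F c‖ ^ 2 = ∑ j, ‖d j - c j‖ ^ 2 := by
    rw [hFsub, hFnorm, Real.sq_sqrt (Finset.sum_nonneg fun j _ => pow_nonneg (norm_nonneg _) 2)]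
  calc (s - Real.sqrt η) ^ 2 ≤ ∑ j, ‖d j - c j‖ ^ 2 := by
        rw [← hnormsub]; exact hsq
    _ = ∑ j, ‖aH (X - Z) j‖ ^ 2 := by
        apply Finset.sum_congr rfl; intro j _; rw [hsub]
    _ ≤ ∑ j, ∑ i, ‖(X - Z) i j‖ ^ 2 := by
        apply Finset.sum_le_sum; intro j _
        rw [haH]; exact key _ j
    _ = ∑ i, ∑ j, ‖(X - Z) i j‖ ^ 2 := Finset.sum_comm
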